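/- Let f : ℝ → ℝ be bounded and regulated, and satisfy the no-jamming condition. Let x : [0,τ] → ℝ be a strictly increasing Carathéodory solution of ẋ = f(x), x(0) = x₀. Then for every t ∈ [0,τ] one has the identity t = ∫_{x₀}^{x(t)} 1/f(y) dy + Leb({s ∈ [0,t] : f(x(s)) = 0}), where Leb denotes Lebesgue measure on the time axis and the first integral is the Lebesgue integral of 1/f over the set where f ≠ 0 in [x₀, x(t)]. -/

import Mathlib

open MeasureTheory Set Filter

open Topology

open Interval

lemma ae_hasDerivAt_primitive (G : ℝ → ℝ) (hG : Integrable G volume) :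
    ∀ᵐ s : ℝ, HasDerivAt (fun u => ∫ v in (0:ℝ)..u, G v) (G s) s := by
  filter_upwards [IsUnifLocDoublingMeasure.ae_tendsto_average_norm_sub (μ := (volume : Measure ℝ))
    hG.locallyIntegrable 1] with s hs
  set z : ℝ → ℝ := fun u => ∫ v in (0:ℝ)..u, G v with hz
  rw [hasDerivAt_iff_tendsto]
  set F : ℝ → ℝ := fun u => ‖u - s‖⁻¹ * ‖z u - z s - (u - s) • G s‖ with hF
  have key : Tendsto (fun u : ℝ => ⨍ y in Metric.closedBall s |u - s|, ‖G y - G s‖) (𝓝[≠] s) (𝓝 0) := by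
    apply hs (fun _ => s) (fun u => |u - s|)
    · apply tendsto_nhdsWithin_of_tendsto_nhds_of_eventually_within
      · have : Tendsto (fun u : ℝ => |u - s|) (𝓝 s) (𝓝 |s - s|) := by
          exact (continuous_abs.comp (continuous_id.sub continuous_const)).tendsto s
        simpa using this.mono_left nhdsWithin_le_nhds
      · filter_upwards [self_mem_nhdsWithin] with u hu
        exact abs_pos.2 (sub_ne_zero.2 hu)
    · filter_upwards with u
      simp [Metric.mem_closedBall, dist_self, abs_nonneg]
  have hbound : ∀ᶠ u in 𝓝[≠] s, F u ≤ 2 * ⨍ y in Metric.closedBall s |u - s|, ‖G y - G s‖ := by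
    filter_upwards [self_mem_nhdsWithin] with u hu
    have hus : u ≠ s := hu
    have habs : (0:ℝ) < |u - s| := abs_pos.2 (sub_ne_zero.2 hus)
    have hint1 : IntervalIntegrable G volume 0 u := hG.intervalIntegrable
    have hint2 : IntervalIntegrable G volume 0 s := hG.intervalIntegrable
    have hzz : z u - z s = ∫ v in s..u, G v := intervalIntegral.integral_interval_sub_left hint1 hint2
    have hconst : (u - s) • G s = ∫ v in s..u, G s := by
      rw [intervalIntegral.integral_const]
    have hdiff : z u - z s - (u - s) • G s = ∫ v in s..u, (G v - G s) := by
      rw [hzz, hconst, intervalIntegral.integral_sub hG.intervalIntegrable intervalIntegrable_const]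
    have hIoc : ‖∫ v in s..u, (G v - G s)‖ ≤ ∫ v in Ι s u, ‖G v - G s‖ :=
      intervalIntegral.norm_integral_le_integral_norm_uIoc
    have hsub : Ι s u ⊆ Metric.closedBall s |u - s| := by
      intro v hv
      rw [Metric.mem_closedBall, Real.dist_eq]
      rcases le_total s u with h | h
      · rw [uIoc_of_le h] at hv
        rw [abs_of_nonneg (by linarith [hv.1.le]), abs_of_nonneg (by linarith)]
        linarith [hv.2]
      · rw [uIoc_of_ge h] at hv
        rw [abs_of_nonpos (by linarith [hv.2]), abs_of_nonpos (by linarith)]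
        linarith [hv.1]
    have hintcb : IntegrableOn (fun v => ‖G v - G s‖) (Metric.closedBall s |u - s|) volume := by
      apply Integrable.norm
      exact hG.integrableOn.sub (integrableOn_const (by
        rw [Real.volume_closedBall]; exact ENNReal.ofReal_ne_top))
    have hmono : ∫ v in Ι s u, ‖G v - G s‖ ≤ ∫ v in Metric.closedBall s |u - s|, ‖G v - G s‖ := by
      apply setIntegral_mono_set hintcb
      · filter_upwards with v using norm_nonneg _
      · exact HasSubset.Subset.eventuallyLE hsub
    have havg : (⨍ y in Metric.closedBall s |u - s|, ‖G y - G s‖)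
        = (2 * |u - s|)⁻¹ * ∫ v in Metric.closedBall s |u - s|, ‖G v - G s‖ := by
      rw [setAverage_eq, measureReal_def, Real.volume_closedBall, ENNReal.toReal_ofReal (by positivity), smul_eq_mul]
    rw [hF]
    simp only
    rw [hdiff, havg]
    have : ‖u - s‖⁻¹ = 2 * (2 * |u - s|)⁻¹ := by
      rw [Real.norm_eq_abs]
      field_simp
    rw [this]
    have h2 : (0:ℝ) ≤ (2 * |u - s|)⁻¹ := by positivity
    calc 2 * (2 * |u - s|)⁻¹ * ‖∫ v in s..u, (G v - G s)‖
        ≤ 2 * (2 * |u - s|)⁻¹ * ∫ v in Metric.closedBall s |u - s|, ‖G v - G s‖ := by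
          apply mul_le_mul_of_nonneg_left (le_trans hIoc hmono) (by positivity)
      _ = 2 * ((2 * |u - s|)⁻¹ * ∫ v in Metric.closedBall s |u - s|, ‖G v - G s‖) := by ring
  have h1 : Tendsto F (𝓝[≠] s) (𝓝 0) := by
    apply squeeze_zero' (by filter_upwards with u; positivity) hbound
    simpa using key.const_mul 2
  have hFs : F s = 0 := by simp [hF]
  have h2 : Tendsto F (pure s) (𝓝 0) := by
    rw [← hFs]
    exact tendsto_pure_nhds F s
  rw [← nhdsNE_sup_pure s]
  rw [tendsto_sup]
  exact ⟨h1, h2⟩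


lemma countable_of_no_left_accum {A : Set ℝ}
    (h : ∀ c : ℝ, ∃ δ > (0:ℝ), ∀ w ∈ A, ¬ (c - δ < w ∧ w < c)) : A.Countable := by
  choose δ hδ hδ2 using h
  have hq : ∀ y : ℝ, ∃ q : ℚ, y - δ y < (q:ℝ) ∧ (q:ℝ) < y := by
    intro y
    exact exists_rat_btwn (by linarith [hδ y])
  choose q hq1 hq2 using hq
  apply Set.countable_of_injective_of_countable_image (f := q)
  · intro a ha b hb hab
    by_contra hne
    rcases lt_or_gt_of_ne hne with hlt | hlt
    · exact hδ2 b a ha ⟨by calc b - δ b < (q b : ℝ) := hq1 b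
        _ = (q a : ℝ) := by rw [hab]
        _ < a := hq2 a, hlt⟩
    · exact hδ2 a b hb ⟨by calc a - δ a < (q a : ℝ) := hq1 a
        _ = (q b : ℝ) := by rw [hab]
        _ < b := hq2 b, hlt⟩
  · exact (Set.countable_univ).mono (Set.subset_univ _)

lemma fr_right_cont {f fr : ℝ → ℝ}
    (hreg : ∀ y : ℝ, Tendsto f (𝓝[>] y) (𝓝 (fr y))) (y : ℝ) :
    Tendsto fr (𝓝[>] y) (𝓝 (fr y)) := by
  rw [Metric.tendsto_nhdsWithin_nhds]
  intro ε hε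
  have h0 := hreg y
  rw [Metric.tendsto_nhdsWithin_nhds] at h0
  obtain ⟨δ, hδ, hδ2⟩ := h0 (ε/2) (by linarith)
  refine ⟨δ, hδ, ?_⟩
  intro w hw hwd
  have hwy : y < w := hw
  have hwlt : w < y + δ := by
    rw [Real.dist_eq, abs_of_pos (by linarith)] at hwd
    linarith
  have hev : ∀ᶠ z in 𝓝[>] w, dist (f z) (fr y) ≤ ε / 2 := by
    have hmem : Ioo w (y + δ) ∈ 𝓝[>] w := Ioo_mem_nhdsGT_of_mem ⟨le_refl w, hwlt⟩
    filter_upwards [hmem] with z hz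
    exact le_of_lt (hδ2 (lt_trans hwy hz.1) (by
      rw [Real.dist_eq, abs_of_pos (by linarith [hz.1, hwy])]
      linarith [hz.2]))
  have hlim : Tendsto (fun z => dist (f z) (fr y)) (𝓝[>] w) (𝓝 (dist (fr w) (fr y))) :=
    (hreg w).dist tendsto_const_nhds
  have hle : dist (fr w) (fr y) ≤ ε/2 := le_of_tendsto hlim hev
  calc dist (fr w) (fr y) ≤ ε/2 := hle
    _ < ε := by linarith

lemma measurable_of_right_cont {F : ℝ → ℝ}
    (hF : ∀ y, Tendsto F (𝓝[>] y) (𝓝 (F y))) : Measurable F := by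
  have hF' : ∀ y, Tendsto F (𝓝[≥] y) (𝓝 (F y)) := by
    intro y
    have : Ici y = insert y (Ioi y) := by
      ext z; simp [le_iff_lt_or_eq, or_comm, eq_comm]
    rw [this, nhdsWithin_insert, tendsto_sup]
    exact ⟨tendsto_pure_nhds F y, hF y⟩
  set Z : ℕ → ℝ → ℝ := fun n y => (⌈y * (n+1)⌉ : ℝ) / (n+1) with hZ
  have hmeas : ∀ n, Measurable (fun y => F (Z n y)) := by
    intro n
    have h1 : Measurable (fun y : ℝ => ⌈y * ((n:ℝ)+1)⌉) :=
      Int.measurable_ceil.comp (measurable_id.mul_const _)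
    exact (measurable_from_top (f := fun k : ℤ => F ((k:ℝ)/((n:ℝ)+1)))).comp h1
  apply measurable_of_tendsto_metrizable hmeas
  rw [tendsto_pi_nhds]
  intro y
  have hzy : ∀ n : ℕ, y ≤ Z n y ∧ Z n y ≤ y + 1/((n:ℝ)+1) := by
    intro n
    have hn : (0:ℝ) < (n:ℝ) + 1 := by positivity
    constructor
    · rw [hZ]; simp only
      rw [le_div_iff₀ hn]
      exact Int.le_ceil _
    · rw [hZ]; simp only
      rw [div_le_iff₀ hn]
      have := (Int.ceil_lt_add_one (y * ((n:ℝ)+1))).le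
      calc ((⌈y * ((n:ℝ)+1)⌉ : ℝ)) ≤ y * ((n:ℝ)+1) + 1 := this
        _ = (y + 1/((n:ℝ)+1)) * ((n:ℝ)+1) := by field_simp
  have htend : Tendsto (fun n => Z n y) atTop (𝓝[≥] y) := by
    apply tendsto_nhdsWithin_of_tendsto_nhds_of_eventually_within
    · have h1 : Tendsto (fun n : ℕ => y + 1/((n:ℝ)+1)) atTop (𝓝 y) := by
        have := tendsto_one_div_add_atTop_nhds_zero_nat (𝕜 := ℝ)
        simpa using (tendsto_const_nhds (x := y)).add this
      exact tendsto_of_tendsto_of_tendsto_of_le_of_le tendsto_const_nhds h1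
        (fun n => (hzy n).1) (fun n => (hzy n).2)
    · filter_upwards with n using (hzy n).1
  exact (hF' y).comp htend

lemma countable_ne_fr {f fl fr : ℝ → ℝ}
    (hl : ∀ y : ℝ, Tendsto f (𝓝[<] y) (𝓝 (fl y)))
    (hr : ∀ y : ℝ, Tendsto f (𝓝[>] y) (𝓝 (fr y))) :
    {y : ℝ | f y ≠ fr y}.Countable := by
  have key : ∀ n : ℕ, {y : ℝ | 1/((n:ℝ)+1) ≤ dist (f y) (fr y)}.Countable := by
    intro n
    set ε := 1/((n:ℝ)+1) with hεdef
    have hε : 0 < ε := by positivity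
    apply countable_of_no_left_accum
    intro c
    have h0 := hl c
    rw [Metric.tendsto_nhdsWithin_nhds] at h0
    obtain ⟨δ, hδ, hδ2⟩ := h0 (ε/3) (by linarith)
    refine ⟨δ, hδ, ?_⟩
    rintro w hw ⟨h1, h2⟩
    have hfw : dist (f w) (fl c) < ε/3 :=
      hδ2 h2 (by rw [Real.dist_eq, abs_of_neg (by linarith)]; linarith)
    have hev : ∀ᶠ z in 𝓝[>] w, dist (f z) (fl c) ≤ ε/3 := by
      filter_upwards [Ioo_mem_nhdsGT_of_mem ⟨le_refl w, h2⟩] with z hz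
      exact le_of_lt (hδ2 hz.2
        (by rw [Real.dist_eq, abs_of_neg (by linarith [hz.2])]; linarith [hz.1, h1]))
    have hfrw : dist (fr w) (fl c) ≤ ε/3 := le_of_tendsto ((hr w).dist tendsto_const_nhds) hev
    have hcon : dist (f w) (fr w) < ε := by
      calc dist (f w) (fr w) ≤ dist (f w) (fl c) + dist (fl c) (fr w) := dist_triangle _ _ _
        _ = dist (f w) (fl c) + dist (fr w) (fl c) := by rw [dist_comm (fl c)]
        _ < ε := by linarith
    have hw' : ε ≤ dist (f w) (fr w) := hw
    linarith
  have hsub : {y : ℝ | f y ≠ fr y} ⊆ ⋃ n : ℕ, {y : ℝ | 1/((n:ℝ)+1) ≤ dist (f y) (fr y)} := by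
    intro y hy
    have hd : 0 < dist (f y) (fr y) := dist_pos.2 hy
    obtain ⟨n, hn⟩ := exists_nat_one_div_lt hd
    exact mem_iUnion.2 ⟨n, hn.le⟩
  exact Set.Countable.mono hsub (Set.countable_iUnion key)

/-- `f` is regulated with left limits `fl` and right limits `fr`. -/
def Regulated (f fl fr : ℝ → ℝ) : Prop :=
  ∀ y : ℝ,
    Filter.Tendsto f (nhdsWithin y (Set.Iio y)) (nhds (fl y)) ∧
    Filter.Tendsto f (nhdsWithin y (Set.Ioi y)) (nhds (fr y))

/-- The no-jamming condition: if `f(y−)·f(y+) = 0` or `f(y−) > 0 > f(y+)`, then `f(y) = 0`. -/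
def NoJamming (f fl fr : ℝ → ℝ) : Prop :=
  ∀ y : ℝ, (fl y * fr y = 0 ∨ (0 < fl y ∧ fr y < 0)) → f y = 0









/-- For a strictly increasing Carathéodory solution of `ẋ = f(x)`, `x(0) = x₀`,
one has `t = ∫_{x₀}^{x(t)} 1/f(y) dy + Leb{s ∈ [0,t] : f(x(s)) = 0}`, where the
integral of `1/f` is over the set where `f ≠ 0` (note `(f y)⁻¹ = 0` where `f y = 0`). -/
theorem time_decomposition_for_increasing_solution
    (f : ℝ → ℝ) (M : ℝ) (hb : ∀ y : ℝ, |f y| ≤ M)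
    (fl fr : ℝ → ℝ) (hreg : Regulated f fl fr) (hnj : NoJamming f fl fr)
    (τ : ℝ) (hτ : 0 ≤ τ) (x₀ : ℝ) (x : ℝ → ℝ)
    (hmono : StrictMonoOn x (Set.Icc 0 τ))
    (hsol : ∀ t ∈ Set.Icc (0:ℝ) τ, x t = x₀ + ∫ s in (0:ℝ)..t, f (x s)) :
    ∀ t ∈ Set.Icc (0:ℝ) τ,
      t = (∫ y in Set.Icc x₀ (x t), (f y)⁻¹)
          + (volume {s : ℝ | s ∈ Set.Icc 0 t ∧ f (x s) = 0}).toReal := by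
  intro t ht
  obtain ⟨ht0, htτ⟩ := ht
  have hM : 0 ≤ M := le_trans (abs_nonneg _) (hb 0)
  have hx0 : x 0 = x₀ := by simpa using hsol 0 ⟨le_refl 0, hτ⟩
  have hD : {y : ℝ | f y ≠ fr y}.Countable :=
    countable_ne_fr (fun y => (hreg y).1) (fun y => (hreg y).2)
  have hfrm : Measurable fr := measurable_of_right_cont (fr_right_cont (fun y => (hreg y).2))
  set G : ℝ → ℝ := fun s => f (x s) with hGdef
  have hxm : AEMeasurable x (volume.restrict (Icc 0 τ)) :=
    aemeasurable_restrict_of_monotoneOn measurableSet_Icc hmono.monotoneOn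
  have hinj : InjOn x (Icc 0 τ) := hmono.injOn
  have hES : {s : ℝ | s ∈ Icc 0 τ ∧ f (x s) ≠ fr (x s)}.Countable := by
    apply Set.countable_of_injective_of_countable_image (f := x)
    · exact hinj.mono (fun s hs => hs.1)
    · exact hD.mono (by rintro _ ⟨s, hs, rfl⟩; exact hs.2)
  have hG_ae : G =ᵐ[volume.restrict (Icc 0 τ)] (fr ∘ x) := by
    rw [Filter.EventuallyEq, Filter.Eventually, mem_ae_iff,
      Measure.restrict_apply' measurableSet_Icc]
    refine measure_mono_null ?_ (hES.measure_zero volume)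
    rintro s ⟨hs1, hs2⟩
    exact ⟨hs2, hs1⟩
  have hGm : AEMeasurable G (volume.restrict (Icc 0 τ)) :=
    (hfrm.comp_aemeasurable hxm).congr hG_ae.symm
  set G' : ℝ → ℝ := (Icc 0 τ).indicator G with hG'def
  have hG'm : AEMeasurable G' volume := (aemeasurable_indicator_iff measurableSet_Icc).2 hGm
  have hG'b : ∀ s, ‖G' s‖ ≤ M := by
    intro s
    rw [Real.norm_eq_abs, hG'def]
    by_cases h : s ∈ Icc 0 τ
    · rw [indicator_of_mem h]; exact hb _
    · rw [indicator_of_notMem h]; simpa using hM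
  have hG'i : Integrable G' volume := by
    apply Integrable.mono' (g := (Icc 0 τ).indicator (fun _ => M))
    · exact (integrable_indicator_iff measurableSet_Icc).2
        (integrableOn_const measure_Icc_lt_top.ne)
    · exact hG'm.aestronglyMeasurable
    · filter_upwards with s
      rw [Real.norm_eq_abs, hG'def]
      by_cases h : s ∈ Icc 0 τ
      · rw [indicator_of_mem h, indicator_of_mem h]; exact hb _
      · rw [indicator_of_notMem h, indicator_of_notMem h]; simp
  set z : ℝ → ℝ := fun u => ∫ v in (0:ℝ)..u, G' v with hzdef
  have hzx : ∀ u ∈ Icc 0 τ, x u = x₀ + z u := by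
    intro u hu
    rw [hsol u hu]
    congr 1
    apply intervalIntegral.integral_congr
    intro v hv
    rw [uIcc_of_le hu.1] at hv
    have hvm : v ∈ Icc 0 τ := ⟨hv.1, le_trans hv.2 hu.2⟩
    exact (Set.indicator_of_mem hvm G).symm
  have hzlip : LipschitzWith M.toNNReal z := by
    apply LipschitzWith.of_dist_le_mul
    intro a b
    rw [Real.dist_eq, Real.dist_eq, Real.coe_toNNReal M hM]
    have hdz : z a - z b = ∫ v in b..a, G' v :=
      intervalIntegral.integral_interval_sub_left hG'i.intervalIntegrable hG'i.intervalIntegrable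
    calc |z a - z b| = ‖∫ v in b..a, G' v‖ := by rw [hdz, Real.norm_eq_abs]
      _ ≤ M * |a - b| := intervalIntegral.norm_integral_le_of_norm_le_const (fun v _ => hG'b v)
  have hzc : Continuous z := intervalIntegral.continuous_primitive (fun a b => hG'i.intervalIntegrable) 0
  have hcont : ContinuousOn x (Icc 0 τ) :=
    ((continuous_const.add hzc).continuousOn).congr hzx
  have hxlip : LipschitzOnWith M.toNNReal x (Icc 0 τ) := by
    intro a ha b hb'
    rw [hzx a ha, hzx b hb', edist_add_left]
    exact hzlip a b
  -- the good set S
  have hBnull : volume {s : ℝ | ¬ HasDerivAt z (G' s) s} = 0 :=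
    ae_iff.1 (ae_hasDerivAt_primitive G' hG'i)
  set E : Set ℝ := toMeasurable volume {s : ℝ | ¬ HasDerivAt z (G' s) s} with hEdef
  have hEnull : volume E = 0 := by rw [hEdef, measure_toMeasurable]; exact hBnull
  have hEm : MeasurableSet E := measurableSet_toMeasurable _ _
  set S : Set ℝ := Ioo 0 t \ E with hSdef
  have hSm : MeasurableSet S := measurableSet_Ioo.diff hEm
  have hSsub : S ⊆ Ioo 0 t := diff_subset
  have hSsub' : S ⊆ Icc 0 τ := fun s hs => ⟨(hSsub hs).1.le, le_trans (hSsub hs).2.le htτ⟩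
  have hxd : ∀ s ∈ S, HasDerivAt x (G s) s := by
    intro s hs
    have h1 : HasDerivAt z (G' s) s :=
      not_not.1 (fun hcon => hs.2 (subset_toMeasurable _ _ hcon))
    have hG's : G' s = G s := indicator_of_mem (hSsub' hs) G
    have h2 : HasDerivAt (fun u => x₀ + z u) (G s) s := by
      rw [← hG's]; exact h1.const_add x₀
    apply h2.congr_of_eventuallyEq
    have hmem : Icc 0 τ ∈ 𝓝 s :=
      Icc_mem_nhds (hSsub hs).1 (lt_of_lt_of_le (hSsub hs).2 htτ)
    filter_upwards [hmem] with u hu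
    exact hzx u hu
  have hderiveq : ∀ s ∈ S, deriv x s = G s := fun s hs => (hxd s hs).deriv
  have hGnn : ∀ s ∈ S, 0 ≤ G s := by
    intro s hs
    have hslope : Tendsto (slope x s) (𝓝[>] s) (𝓝 (G s)) :=
      (hasDerivAt_iff_tendsto_slope.1 (hxd s hs)).mono_left
        (nhdsWithin_mono s (fun u hu => ne_of_gt hu))
    have hev : ∀ᶠ u in 𝓝[>] s, 0 ≤ slope x s u := by
      filter_upwards [Ioc_mem_nhdsGT_of_mem
        ⟨le_refl s, lt_of_lt_of_le (hSsub hs).2 htτ⟩] with u hu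
      have h1 : x s ≤ x u := hmono.monotoneOn (hSsub' hs)
        ⟨le_trans (hSsub hs).1.le hu.1.le, hu.2⟩ hu.1.le
      rw [slope_def_field]
      exact div_nonneg (sub_nonneg.2 h1) (sub_nonneg.2 hu.1.le)
    exact ge_of_tendsto hslope hev
  set A : Set ℝ := {s : ℝ | deriv x s = 0} with hAdef
  have hAm : MeasurableSet A := (measurable_deriv x) (measurableSet_singleton 0)
  have hvolS : volume S = ENNReal.ofReal t := by
    rw [hSdef, measure_diff_null hEnull, Real.volume_Ioo, sub_zero]
  -- null sets
  have hbadnull : volume (Icc 0 t \ S) = 0 := by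
    have hsub2 : Icc 0 t \ S ⊆ ({(0:ℝ)} ∪ {t}) ∪ E := by
      rintro s ⟨hs1, hs2⟩
      by_cases h0 : s = 0
      · exact Or.inl (Or.inl h0)
      by_cases htt : s = t
      · exact Or.inl (Or.inr htt)
      have hio : s ∈ Ioo 0 t := ⟨lt_of_le_of_ne hs1.1 (Ne.symm h0), lt_of_le_of_ne hs1.2 htt⟩
      right
      by_contra hE
      exact hs2 ⟨hio, hE⟩
    refine measure_mono_null hsub2 ?_
    refine measure_union_null (measure_union_null ?_ ?_) hEnull <;> exact measure_singleton _
  have hximgnull : volume (x '' (Icc 0 t \ S)) = 0 := by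
    have hlip2 : LipschitzOnWith M.toNNReal x (Icc 0 t \ S) :=
      hxlip.mono (fun s hs => ⟨hs.1.1, le_trans hs.1.2 htτ⟩)
    have hh := hlip2.hausdorffMeasure_image_le (d := 1) zero_le_one
    rw [hausdorffMeasure_real, hbadnull, mul_zero] at hh
    exact le_antisymm hh (by simp)
  have hx0t : x '' (Icc 0 t) = Icc x₀ (x t) := by
    apply Subset.antisymm
    · rintro _ ⟨s, hs, rfl⟩
      have hsI : s ∈ Icc 0 τ := ⟨hs.1, le_trans hs.2 htτ⟩
      exact ⟨hx0 ▸ hmono.monotoneOn ⟨le_refl 0, hτ⟩ hsI hs.1,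
        hmono.monotoneOn hsI ⟨ht0, htτ⟩ hs.2⟩
    · rw [← hx0]
      exact intermediate_value_Icc ht0 (hcont.mono (Icc_subset_Icc le_rfl htτ))
  have himgae : (x '' S) =ᵐ[volume] (Icc x₀ (x t)) := by
    rw [MeasureTheory.ae_eq_set]
    constructor
    · have hsubimg : x '' S ⊆ Icc x₀ (x t) := by
        rw [← hx0t]
        exact image_mono (f := x) (fun s hs => ⟨(hSsub hs).1.le, (hSsub hs).2.le⟩)
      rw [diff_eq_empty.2 hsubimg, measure_empty]
    · refine measure_mono_null ?_ hximgnull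
      rw [← hx0t]
      exact Set.subset_image_diff x (Icc 0 t) S
  have hCoV : ∫ y in x '' S, (f y)⁻¹ = ∫ s in S, |G s| • (f (x s))⁻¹ :=
    integral_image_eq_integral_abs_deriv_smul hSm
      (fun s hs => (hxd s hs).hasDerivWithinAt) (hinj.mono hSsub') (fun y => (f y)⁻¹)
  have hInt1 : (∫ y in Icc x₀ (x t), (f y)⁻¹) = ∫ s in S, |G s| * (G s)⁻¹ := by
    rw [← setIntegral_congr_set himgae, hCoV]
    rfl
  have hInt2 : (∫ s in S, |G s| * (G s)⁻¹) = (volume (S \ A)).toReal := by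
    have heq : EqOn (fun s => |G s| * (G s)⁻¹) (Aᶜ.indicator (fun _ => (1:ℝ))) S := by
      intro s hs
      by_cases h : G s = 0
      · have hd0 : s ∈ A := by rw [hAdef, mem_setOf_eq, hderiveq s hs, h]
        simp only [h, abs_zero, zero_mul, indicator_apply]
        rw [if_neg (by simpa using hd0)]
      · have hpos : 0 < G s := lt_of_le_of_ne (hGnn s hs) (Ne.symm h)
        have hd : s ∈ Aᶜ := by
          simp only [hAdef, mem_compl_iff, mem_setOf_eq, hderiveq s hs]; exact h
        simp only [abs_of_pos hpos, mul_inv_cancel₀ h, indicator_apply, if_pos hd]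
    rw [setIntegral_congr_fun hSm heq, setIntegral_indicator hAm.compl, setIntegral_const,
      smul_eq_mul, mul_one, diff_eq, measureReal_def]
  have hW : volume {s : ℝ | s ∈ Icc 0 t ∧ f (x s) = 0} = volume (S ∩ A) := by
    apply le_antisymm
    · have hsubW : {s : ℝ | s ∈ Icc 0 t ∧ f (x s) = 0} ⊆ (S ∩ A) ∪ (Icc 0 t \ S) := by
        rintro s ⟨hs1, hs2⟩
        by_cases hsS : s ∈ S
        · exact Or.inl ⟨hsS, by rw [hAdef, mem_setOf_eq, hderiveq s hsS]; exact hs2⟩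
        · exact Or.inr ⟨hs1, hsS⟩
      calc volume {s : ℝ | s ∈ Icc 0 t ∧ f (x s) = 0}
          ≤ volume ((S ∩ A) ∪ (Icc 0 t \ S)) := measure_mono hsubW
        _ ≤ volume (S ∩ A) + volume (Icc 0 t \ S) := measure_union_le _ _
        _ = volume (S ∩ A) := by rw [hbadnull, add_zero]
    · apply measure_mono
      rintro s ⟨hsS, hsA⟩
      refine ⟨⟨(hSsub hsS).1.le, (hSsub hsS).2.le⟩, ?_⟩
      have hds : deriv x s = 0 := hsA
      show G s = 0
      rw [hderiveq s hsS] at hds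
      exact hds
  -- finish
  have hfin : volume (S ∩ A) + volume (S \ A) = volume S := measure_inter_add_diff S hAm
  have hne1 : volume (S ∩ A) ≠ ⊤ := by
    refine ne_top_of_le_ne_top ?_ (measure_mono inter_subset_left)
    rw [hvolS]; exact ENNReal.ofReal_ne_top
  have hne2 : volume (S \ A) ≠ ⊤ := by
    refine ne_top_of_le_ne_top ?_ (measure_mono diff_subset)
    rw [hvolS]; exact ENNReal.ofReal_ne_top
  rw [hInt1, hInt2, hW]
  rw [← ENNReal.toReal_add hne2 hne1, add_comm (volume (S \ A)), hfin, hvolS,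
    ENNReal.toReal_ofReal ht0]
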